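/- If h_1,…,h_m : ℝⁿ → ℝ are continuously differentiable, then ψ̃(z) = (1/2)·(∏_{i=1}^m [h_i(z)]₊)² is differentiable with gradient ∇ψ̃(z) = Σ_{i=1}^m [h_i(z)]₊ · (∏_{j≠i} [h_j(z)]₊²) · ∇h_i(z). -/

import Mathlib

open InnerProductSpace Asymptotics

lemma sq_max_deriv (w : ℝ) : HasDerivAt (fun w : ℝ => max w 0 ^ 2) (2 * max w 0) w := by
  rcases lt_trichotomy w 0 with hw | hw | hw
  · have : HasDerivAt (fun _ : ℝ => (0:ℝ)) 0 w := hasDerivAt_const _ _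
    have heq : (fun w : ℝ => max w 0 ^ 2) =ᶠ[nhds w] fun _ => (0:ℝ) := by
      filter_upwards [eventually_lt_nhds hw] with x hx
      simp [max_eq_right hx.le]
    rw [max_eq_right hw.le, mul_zero]
    exact this.congr_of_eventuallyEq heq
  · subst hw
    rw [max_self, mul_zero]
    rw [hasDerivAt_iff_isLittleO]
    rw [isLittleO_iff]
    intro c hc
    filter_upwards [Metric.ball_mem_nhds (0:ℝ) hc] with x hx
    simp only [Metric.mem_ball, Real.dist_eq, sub_zero] at hx
    simp only [max_self, ne_eq, OfNat.ofNat_ne_zero, not_false_eq_true, zero_pow, sub_zero,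
      smul_eq_mul, mul_zero]
    have : |max x 0 ^ 2| ≤ |x| * |x| := by
      rw [abs_of_nonneg (sq_nonneg _), sq]
      gcongr <;> simp [abs_le, le_abs_self, neg_le, le_max_iff, le_abs_self, neg_abs_le]
    calc ‖max x 0 ^ 2‖ = |max x 0 ^ 2| := by simp
      _ ≤ |x| * |x| := this
      _ ≤ c * |x| := by gcongr
      _ = c * ‖x‖ := by simp
  · have : HasDerivAt (fun w : ℝ => w ^ 2) (2 * w) w := by
      simpa using hasDerivAt_pow 2 w
    have heq : (fun w : ℝ => max w 0 ^ 2) =ᶠ[nhds w] fun w => w ^ 2 := by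
      filter_upwards [eventually_gt_nhds hw] with x hx
      simp [max_eq_left hx.le]
    rw [max_eq_left hw.le]
    exact this.congr_of_eventuallyEq heq

theorem quadratic_penalty_gradient (n m : ℕ)
    (h : Fin m → EuclideanSpace ℝ (Fin n) → ℝ)
    (hh : ∀ i, ContDiff ℝ 1 (h i))
    (g : Fin m → EuclideanSpace ℝ (Fin n) → EuclideanSpace ℝ (Fin n))
    (hg : ∀ i z, HasGradientAt (h i) (g i z) z) :
    Differentiable ℝ (fun z => (1 / 2 : ℝ) * (∏ i, max (h i z) 0) ^ 2) ∧
      ∀ z, HasGradientAt (fun z => (1 / 2 : ℝ) * (∏ i, max (h i z) 0) ^ 2)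
        (∑ i, (max (h i z) 0 *
            ∏ j ∈ Finset.univ.erase i, (max (h j z) 0) ^ 2) • g i z) z := by
  have key : ∀ z, HasGradientAt (fun z => (1 / 2 : ℝ) * (∏ i, max (h i z) 0) ^ 2)
      (∑ i, (max (h i z) 0 *
          ∏ j ∈ Finset.univ.erase i, (max (h j z) 0) ^ 2) • g i z) z := by
    intro z
    -- fderiv of each (max (h i ·) 0)^2
    have hsq : ∀ i, HasFDerivAt (fun z => max (h i z) 0 ^ 2)
        ((2 * max (h i z) 0) • (toDual ℝ _ (g i z)) : _ →L[ℝ] ℝ) z := by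
      intro i
      exact (sq_max_deriv (h i z)).comp_hasFDerivAt z ((hg i z).hasFDerivAt)
    have hprod := HasFDerivAt.finset_prod (u := (Finset.univ : Finset (Fin m))) (fun i _ => hsq i)
    rw [hasGradientAt_iff_hasFDerivAt]
    have hfun : (fun z => (1/2:ℝ) * (∏ i, max (h i z) 0)^2)
        = fun z => (1/2:ℝ) * ∏ i, (max (h i z) 0)^2 := by
      funext z; rw [Finset.prod_pow]
    rw [hfun]
    have h2 := hprod.const_mul (1/2:ℝ)
    convert h2 using 1
    · rfl
    rw [map_sum, Finset.smul_sum]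
    refine Finset.sum_congr rfl fun i _ => ?_
    rw [map_smul, smul_smul, smul_smul]
    congr 1; ring
  exact ⟨fun z => ((key z).hasFDerivAt).differentiableAt, key⟩
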